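/- Let F, G be m×m real matrices and suppose there exist invertible m×m matrices P, Q, a p×p matrix J, and a q×q nilpotent matrix H with p + q = m and H^{q*} = 0, such that P·F·Q is the block-diagonal matrix with blocks I_p and H, and P·G·Q is the block-diagonal matrix with blocks J and I_q. Write Q = [Q_p Q_q] (first p columns, last q columns) and P = [P_1; P_2] (first p rows, last q rows). Then for every input sequence V : ℕ → ℝ^m and every constant vector c ∈ ℝ^p, the sequence Y_k = Q_p·J^k·c + Q·D_k, where D_k ∈ ℝ^m has upper block ∑_{i=0}^{k−1} J^{k−i−1} P_1 V_i ∈ ℝ^p and lower block −∑_{i=0}^{q*−1} H^i P_2 V_{k+i} ∈ ℝ^q, satisfies F·Y_{k+1} = G·Y_k + V_k for all k ∈ ℕ. -/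

import Mathlib

open Matrix Finset

lemma mulVec_sum' {m n α : Type*} [Fintype n] [NonUnitalNonAssocSemiring α]
    (A : Matrix m n α) {ι : Type*} (s : Finset ι) (v : ι → n → α) :
    A.mulVec (∑ i ∈ s, v i) = ∑ i ∈ s, A.mulVec (v i) := by
  classical
  induction s using Finset.induction with
  | empty => simp [Matrix.mulVec_zero]
  | insert _ _ h ih => simp [Finset.sum_insert h, Matrix.mulVec_add, ih]

lemma sum_elim_add_sum_elim {α β γ : Type*} [Add γ] (a b : α → γ) (c d : β → γ) :
    Sum.elim a c + Sum.elim b d = Sum.elim (a + b) (c + d) := by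
  funext j; cases j <;> simp

theorem weierstrass_form_solution
    (p q qs : ℕ)
    (F G P Q : Matrix (Fin p ⊕ Fin q) (Fin p ⊕ Fin q) ℝ)
    (hP : IsUnit P.det) (hQ : IsUnit Q.det)
    (J : Matrix (Fin p) (Fin p) ℝ) (H : Matrix (Fin q) (Fin q) ℝ)
    (hH : H ^ qs = 0)
    (hPFQ : P * F * Q = Matrix.fromBlocks 1 0 0 H)
    (hPGQ : P * G * Q = Matrix.fromBlocks J 0 0 1)
    (Qp : Matrix (Fin p ⊕ Fin q) (Fin p) ℝ) (hQp : Qp = Q.submatrix id Sum.inl)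
    (P1 : Matrix (Fin p) (Fin p ⊕ Fin q) ℝ) (hP1 : P1 = P.submatrix Sum.inl id)
    (P2 : Matrix (Fin q) (Fin p ⊕ Fin q) ℝ) (hP2 : P2 = P.submatrix Sum.inr id)
    (V : ℕ → (Fin p ⊕ Fin q) → ℝ) (c : Fin p → ℝ)
    (D : ℕ → (Fin p ⊕ Fin q) → ℝ)
    (hD : ∀ k, D k = Sum.elim
      (∑ i ∈ Finset.range k, (J ^ (k - i - 1) * P1).mulVec (V i))
      (-(∑ i ∈ Finset.range qs, (H ^ i * P2).mulVec (V (k + i)))))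
    (Y : ℕ → (Fin p ⊕ Fin q) → ℝ)
    (hY : ∀ k, Y k = Qp.mulVec ((J ^ k).mulVec c) + Q.mulVec (D k)) :
    ∀ k : ℕ, F.mulVec (Y (k + 1)) = G.mulVec (Y k) + V k := by
  set S : ℕ → Fin p → ℝ :=
    fun k => ∑ i ∈ Finset.range k, (J ^ (k - i - 1) * P1).mulVec (V i) with hS
  set T : ℕ → Fin q → ℝ :=
    fun k => ∑ i ∈ Finset.range qs, (H ^ i * P2).mulVec (V (k + i)) with hT
  set Z : ℕ → (Fin p ⊕ Fin q) → ℝ :=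
    fun k => Sum.elim ((J ^ k).mulVec c + S k) (-(T k)) with hZ
  have hQpQ : ∀ v : Fin p → ℝ, Qp.mulVec v = Q.mulVec (Sum.elim v 0) := by
    intro v
    funext j
    simp [hQp, Matrix.mulVec, dotProduct, Fintype.sum_sum_type]
  have hYZ : ∀ k, Y k = Q.mulVec (Z k) := by
    intro k
    rw [hY k, hQpQ, hD k, ← Matrix.mulVec_add, sum_elim_add_sum_elim]
    simp [hZ, hS, hT]
  have hPinj : Function.Injective P.mulVec := by
    have : Invertible P := P.invertibleOfIsUnitDet hP
    exact Matrix.mulVec_injective_of_invertible P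
  intro k
  -- the two block equations
  have key_top : (J ^ (k+1)).mulVec c + S (k+1)
      = J.mulVec ((J ^ k).mulVec c + S k) + P1.mulVec (V k) := by
    have h1 : S (k+1) = J.mulVec (S k) + P1.mulVec (V k) := by
      rw [hS]
      simp only
      rw [Finset.sum_range_succ]
      congr 1
      · rw [mulVec_sum']
        refine Finset.sum_congr rfl fun i hi => ?_
        rw [Matrix.mulVec_mulVec, ← Matrix.mul_assoc, ← pow_succ']
        rw [Finset.mem_range] at hi
        have h4 : k + 1 - i - 1 = k - i - 1 + 1 := by omega
        rw [h4]
      · simp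
    rw [h1, Matrix.mulVec_add, Matrix.mulVec_mulVec, ← pow_succ', add_assoc]
  have key_bot : H.mulVec (-(T (k+1))) = -(T k) + P2.mulVec (V k) := by
    cases qs with
    | zero =>
      have h1 : (1 : Matrix (Fin q) (Fin q) ℝ) = 0 := by simpa using hH
      have h2 : P2.mulVec (V k) = 0 := by
        have h3 : P2 = (1 : Matrix (Fin q) (Fin q) ℝ) * P2 := by rw [Matrix.one_mul]
        rw [h3, h1, Matrix.zero_mul, Matrix.zero_mulVec]
      simp [hT, h2]
    | succ n =>
      rw [hT]
      simp only
      rw [Finset.sum_range_succ' (fun i => (H ^ i * P2).mulVec (V (k + i))) n]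
      have hL : H.mulVec (-(∑ i ∈ Finset.range (n+1), (H ^ i * P2).mulVec (V (k + 1 + i))))
          = -(∑ i ∈ Finset.range n, (H ^ (i+1) * P2).mulVec (V (k + (i + 1)))) := by
        rw [Matrix.mulVec_neg, mulVec_sum', Finset.sum_range_succ]
        have hz : (H.mulVec ((H ^ n * P2).mulVec (V (k + 1 + n)))) = 0 := by
          rw [Matrix.mulVec_mulVec, ← Matrix.mul_assoc, ← pow_succ', hH]
          simp [Matrix.zero_mulVec]
        rw [hz, add_zero]
        congr 1
        refine Finset.sum_congr rfl fun i hi => ?_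
        rw [Matrix.mulVec_mulVec, ← Matrix.mul_assoc, ← pow_succ']
        have h4 : k + 1 + i = k + (i + 1) := by omega
        rw [h4]
      rw [hL]
      simp only [pow_zero, Matrix.one_mul, neg_add, Nat.add_zero]
      abel
  apply hPinj
  rw [hYZ, hYZ, Matrix.mulVec_add, Matrix.mulVec_mulVec, Matrix.mulVec_mulVec,
    Matrix.mulVec_mulVec, Matrix.mulVec_mulVec, hPFQ, hPGQ]
  have hPV : P.mulVec (V k) = Sum.elim (P1.mulVec (V k)) (P2.mulVec (V k)) := by
    funext j
    cases j <;> simp [hP1, hP2, Matrix.mulVec, dotProduct]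
  rw [hPV, Matrix.fromBlocks_mulVec, Matrix.fromBlocks_mulVec]
  have z1l : Z (k+1) ∘ Sum.inl = (J ^ (k+1)).mulVec c + S (k+1) := rfl
  have z1r : Z (k+1) ∘ Sum.inr = -(T (k+1)) := rfl
  have z0l : Z k ∘ Sum.inl = (J ^ k).mulVec c + S k := rfl
  have z0r : Z k ∘ Sum.inr = -(T k) := rfl
  rw [z1l, z1r, z0l, z0r, Matrix.one_mulVec, Matrix.zero_mulVec, Matrix.zero_mulVec,
    Matrix.zero_mulVec, Matrix.zero_mulVec, Matrix.one_mulVec, add_zero, zero_add,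
    add_zero, zero_add, sum_elim_add_sum_elim, key_top, key_bot]
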